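/- For k ∈ ℤ define u_k = (2+√3)^k − (2−√3)^k. Let Δ^L > 0, Δ^R > 0, set a = −(1/2)·Δ^L/(Δ^R+Δ^L) and b = −(1/2)·Δ^R/(Δ^R+Δ^L), let (f_k)_{k∈ℤ} be a real sequence, and fix n ≥ 1. Let C_{1,n} be the weighted sum of f_{-1}, …, f_n obtained from the forward recursion (i.e. C_{1,1} = (3/2)·(1/(Δ^R+Δ^L))·[(Δ^L/Δ^R)·f_1 + (Δ^R/Δ^L − Δ^L/Δ^R)·f_0 − (Δ^R/Δ^L)·f_{-1}], C_{1,2} = [4·C_{1,1} + 3·a·(f_2 − f_0)/Δ^R]/(4+a), and C_{1,j+1} = [4·C_{1,j} + (A_j/A_{j-1})·C_{1,j-1} + 3·A_j·(f_{j+1} − f_{j-1})/Δ^R]/(4 + A_j/A_{j-1}) for j ≥ 2, where A_j = (−1)^{j-1}·u_1·a/(u_j + u_{j-1}·a)), and let B_{m} = b_{m,n} denote the backward coefficients with base values a_{1,n} = A_n and b_{1,n} = u_n·b/(u_n + u_{n-1}·a). Define C_{2,n} = [4·C_{1,n} + 3·b_{1,n}·(f_0 − f_{-2})/Δ^L]/(4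 + b_{1,n}) and, for m ≥ 2, C_{m+1,n} = [4·C_{m,n} + (B_m/B_{m-1})·C_{m-1,n} + 3·B_m·(f_{-m+1} − f_{-m-1})/Δ^L]/(4 + B_m/B_{m-1}). Then all denominators in these recursions are nonzero and, for every m ≥ 1, C_{m,n} = Σ_{k=-m}^{n} ω_{k,m,n}·f_k, where, with D = u_m·u_n + u_m·u_{n-1}·a + u_n·u_{m-1}·b: ω_{n,m,n} = 3·(−1)^n·(a/Δ^R)·u_m·u_1/D; ω_{k,m,n} = 3·(−1)^k·(a/Δ^R)·u_m·(u_{n-k+1} − u_{n-k-1})/D for 1 ≤ k ≤ n−1; ω_{0,m,n} = 3·[(a/Δ^R)·u_m·(u_n − u_{n-1}) − (b/Δ^L)·u_n·(u_m − u_{m-1})]/D; ω_{k,m,n} = 3·(−1)^{k+1}·(b/Δ^L)·u_n·(u_{m+k+1} − u_{m+k-1})/D for −(m−1) ≤ k ≤ −1; and ω_{-m,m,n} = 3·(−1)^{m+1}·(b/Δ^L)·u_n·u_1/D. -/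

import Mathlib

/-- The sequence `u_k = (2+√3)^k − (2−√3)^k`, indexed by the integers. -/
noncomputable def uSeq (k : ℤ) : ℝ :=
  (2 + Real.sqrt 3) ^ k - (2 - Real.sqrt 3) ^ k

lemma sqrt3_lt_two : Real.sqrt 3 < 2 := by
  nlinarith [Real.sq_sqrt (by norm_num : (3:ℝ) ≥ 0), Real.sqrt_nonneg 3]

lemma sqrt3_pos : 0 < Real.sqrt 3 := Real.sqrt_pos.2 (by norm_num)

lemma alpha_pos : 0 < 2 + Real.sqrt 3 := by linarith [sqrt3_pos]
lemma beta_pos : 0 < 2 - Real.sqrt 3 := by linarith [sqrt3_lt_two]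
lemma alpha_one_lt : 1 < 2 + Real.sqrt 3 := by linarith [sqrt3_pos]

lemma beta_eq_inv : (2 - Real.sqrt 3) = (2 + Real.sqrt 3)⁻¹ := by
  have h : (2 - Real.sqrt 3) * (2 + Real.sqrt 3) = 1 := by
    nlinarith [Real.sq_sqrt (by norm_num : (3:ℝ) ≥ 0)]
  field_simp at h ⊢
  linarith

lemma uSeq_eq (k : ℤ) : uSeq k = (2 + Real.sqrt 3) ^ k - (2 + Real.sqrt 3) ^ (-k) := by
  rw [uSeq, beta_eq_inv, inv_zpow, ← zpow_neg]

lemma uSeq_rec (k : ℤ) : uSeq (k + 1) = 4 * uSeq k - uSeq (k - 1) := by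
  have hne : (2 + Real.sqrt 3) ≠ 0 := ne_of_gt alpha_pos
  have hsq : (2 + Real.sqrt 3) * (2 + Real.sqrt 3) = 4 * (2 + Real.sqrt 3) - 1 := by
    have := Real.sq_sqrt (by norm_num : (3:ℝ) ≥ 0)
    nlinarith
  have e1 : (2 + Real.sqrt 3) ^ (k+1) = (2 + Real.sqrt 3) ^ (k-1) * ((2 + Real.sqrt 3) * (2 + Real.sqrt 3)) := by
    rw [← mul_assoc, ← zpow_add_one₀ hne, ← zpow_add_one₀ hne]; ring_nf
  have e2 : (2 + Real.sqrt 3) ^ k = (2 + Real.sqrt 3) ^ (k-1) * (2 + Real.sqrt 3) := by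
    rw [← zpow_add_one₀ hne]; ring_nf
  have e3 : (2 + Real.sqrt 3) ^ (-k) = (2 + Real.sqrt 3) ^ (-(k+1)) * (2 + Real.sqrt 3) := by
    rw [← zpow_add_one₀ hne]; ring_nf
  have e4 : (2 + Real.sqrt 3) ^ (-(k-1)) = (2 + Real.sqrt 3) ^ (-(k+1)) * ((2 + Real.sqrt 3) * (2 + Real.sqrt 3)) := by
    rw [← mul_assoc, ← zpow_add_one₀ hne, ← zpow_add_one₀ hne]; ring_nf
  rw [uSeq_eq, uSeq_eq, uSeq_eq, e1, e2, e3, e4, hsq]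
  ring

lemma uSeq_zero : uSeq 0 = 0 := by simp [uSeq]

lemma uSeq_pos {k : ℤ} (hk : 0 < k) : 0 < uSeq k := by
  rw [uSeq_eq]
  have : (-k) < k := by omega
  have := zpow_lt_zpow_right₀ alpha_one_lt this
  linarith

lemma uSeq_nonneg {k : ℤ} (hk : 0 ≤ k) : 0 ≤ uSeq k := by
  rcases eq_or_lt_of_le hk with h | h
  · simp [← h, uSeq_zero]
  · exact le_of_lt (uSeq_pos h)

lemma uSeq_strictMono : StrictMono uSeq := by
  intro x y hxy
  rw [uSeq_eq, uSeq_eq]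
  have h1 := zpow_lt_zpow_right₀ alpha_one_lt hxy
  have h2 := zpow_lt_zpow_right₀ alpha_one_lt (neg_lt_neg hxy)
  linarith

lemma uSeq_two_mul_le {k : ℤ} (hk : 1 ≤ k) : 2 * uSeq (k - 1) ≤ uSeq k := by
  have h1 : uSeq k = 4 * uSeq (k-1) - uSeq (k-2) := by
    have := uSeq_rec (k-1); simpa [show k - 1 + 1 = k by ring, show k-1-1 = k-2 by ring] using this
  have h2 : uSeq (k-2) ≤ uSeq (k-1) := le_of_lt (uSeq_strictMono (by omega))
  have h3 : 0 ≤ uSeq (k-1) := uSeq_nonneg (by omega)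
  linarith

lemma uSeq_one_pos : 0 < uSeq 1 := uSeq_pos one_pos

namespace TSW
noncomputable section

/-- denominator of the forward coefficients -/
def E (a : ℝ) (j : ℕ) : ℝ := uSeq (j : ℤ) + uSeq ((j : ℤ) - 1) * a

/-- common denominator `D_{m,n}` -/
def D (a b : ℝ) (n m : ℕ) : ℝ :=
  uSeq (m : ℤ) * uSeq (n : ℤ) + uSeq (m : ℤ) * uSeq ((n : ℤ) - 1) * a
    + uSeq (n : ℤ) * uSeq ((m : ℤ) - 1) * b

lemma E_pos {a : ℝ} (ha1 : -(1/2) < a) (ha2 : a < 0) {j : ℕ} (hj : 1 ≤ j) :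
    0 < E a j := by
  have h1 : 2 * uSeq ((j:ℤ) - 1) ≤ uSeq (j:ℤ) := uSeq_two_mul_le (by exact_mod_cast hj)
  have h2 : 0 ≤ uSeq ((j:ℤ) - 1) := uSeq_nonneg (by omega)
  have h3 : 0 < uSeq (j:ℤ) := uSeq_pos (by exact_mod_cast hj)
  unfold E
  nlinarith

lemma E_rec (a : ℝ) (j : ℕ) : E a (j + 2) = 4 * E a (j + 1) - E a j := by
  unfold E
  push_cast
  have h1 := uSeq_rec ((j:ℤ) + 1)
  have h2 := uSeq_rec (j:ℤ)
  simp only [show ((j:ℤ) + 2) = ((j:ℤ) + 1) + 1 from by ring] at *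
  rw [h1]
  simp only [show ((j:ℤ) + 1 + 1 - 1) = (j:ℤ) + 1 from by ring,
    show ((j:ℤ) + 1 - 1) = (j:ℤ) from by ring] at *
  rw [h2]
  ring

lemma D_pos {a b : ℝ} (ha1 : -(1/2) < a) (ha2 : a < 0) (hb1 : -(1/2) < b) (hb2 : b < 0)
    {n m : ℕ} (hn : 1 ≤ n) (hm : 1 ≤ m) : 0 < D a b n m := by
  have h1 : 2 * uSeq ((n:ℤ) - 1) ≤ uSeq (n:ℤ) := uSeq_two_mul_le (by exact_mod_cast hn)
  have h2 : 0 ≤ uSeq ((n:ℤ) - 1) := uSeq_nonneg (by omega)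
  have h3 : 0 < uSeq (n:ℤ) := uSeq_pos (by exact_mod_cast hn)
  have h4 : 2 * uSeq ((m:ℤ) - 1) ≤ uSeq (m:ℤ) := uSeq_two_mul_le (by exact_mod_cast hm)
  have h5 : 0 ≤ uSeq ((m:ℤ) - 1) := uSeq_nonneg (by omega)
  have h6 : 0 < uSeq (m:ℤ) := uSeq_pos (by exact_mod_cast hm)
  unfold D
  have k1 : uSeq (m:ℤ) * uSeq ((n:ℤ)-1) * a ≥ -(1/2) * (uSeq (m:ℤ) * uSeq ((n:ℤ)-1)) := by
    nlinarith [mul_nonneg h6.le h2]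
  have k2 : uSeq (n:ℤ) * uSeq ((m:ℤ)-1) * b ≥ -(1/2) * (uSeq (n:ℤ) * uSeq ((m:ℤ)-1)) := by
    nlinarith [mul_nonneg h3.le h5]
  have k3 : 2 * (uSeq (m:ℤ) * uSeq ((n:ℤ)-1)) ≤ uSeq (m:ℤ) * uSeq (n:ℤ) := by
    nlinarith [mul_nonneg h6.le h2]
  have k4 : 2 * (uSeq (n:ℤ) * uSeq ((m:ℤ)-1)) ≤ uSeq (m:ℤ) * uSeq (n:ℤ) := by
    nlinarith [mul_nonneg h3.le h5]
  nlinarith [mul_pos h3 h6]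

lemma D_rec (a b : ℝ) (n : ℕ) (m : ℕ) :
    D a b n (m + 2) = 4 * D a b n (m + 1) - D a b n m := by
  unfold D
  push_cast
  have h1 := uSeq_rec ((m:ℤ) + 1)
  have h2 := uSeq_rec (m:ℤ)
  simp only [show ((m:ℤ) + 2) = ((m:ℤ) + 1) + 1 from by ring] at *
  rw [h1]
  simp only [show ((m:ℤ) + 1 + 1 - 1) = (m:ℤ) + 1 from by ring,
    show ((m:ℤ) + 1 - 1) = (m:ℤ) from by ring] at *
  rw [h2]
  ring

lemma D_one (a b : ℝ) (n : ℕ) : D a b n 1 = uSeq 1 * E a n := by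
  unfold D E
  norm_num [uSeq_zero]
  ring

lemma D_two (a b : ℝ) (n : ℕ) : D a b n 2 = 4 * D a b n 1 + uSeq 1 * uSeq (n:ℤ) * b := by
  unfold D
  have h2 : uSeq 2 = 4 * uSeq 1 - uSeq 0 := by
    have := uSeq_rec 1; norm_num at this ⊢; linarith
  norm_num [uSeq_zero] at h2 ⊢
  rw [h2]
  ring


lemma sum_Icc_top (g : ℤ → ℝ) {x y : ℤ} (h : x ≤ y) :
    ∑ k ∈ Finset.Icc x y, g k = (∑ k ∈ Finset.Icc x (y - 1), g k) + g y := by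
  have hins : Finset.Icc x y = insert y (Finset.Icc x (y - 1)) := by
    ext k; simp only [Finset.mem_Icc, Finset.mem_insert]; omega
  rw [hins, Finset.sum_insert (by simp only [Finset.mem_Icc]; omega)]
  ring

lemma sum_Icc_bot (g : ℤ → ℝ) {x y : ℤ} (h : x ≤ y) :
    ∑ k ∈ Finset.Icc x y, g k = g x + ∑ k ∈ Finset.Icc (x + 1) y, g k := by
  have hins : Finset.Icc x y = insert x (Finset.Icc (x + 1) y) := by
    ext k; simp only [Finset.mem_Icc, Finset.mem_insert]; omega
  rw [hins, Finset.sum_insert (by simp only [Finset.mem_Icc]; omega)]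

variable (a b ΔL ΔR : ℝ) (f : ℤ → ℝ)

/-- numerator of the forward coefficients `C_{1,j}` -/
def V (j : ℕ) : ℝ :=
  3 * (-1 : ℝ) ^ j * (a / ΔR) * uSeq 1 * uSeq 1 * f (j : ℤ)
  + (∑ k ∈ Finset.Icc (1 : ℤ) ((j : ℤ) - 1),
      3 * (-1 : ℝ) ^ k * (a / ΔR) * uSeq 1 * (uSeq ((j : ℤ) - k + 1) - uSeq ((j : ℤ) - k - 1)) * f k)
  + 3 * ((a / ΔR) * uSeq 1 * (uSeq (j : ℤ) - uSeq ((j : ℤ) - 1)) - (b / ΔL) * uSeq (j : ℤ) * uSeq 1) * f 0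
  + 3 * (b / ΔL) * uSeq (j : ℤ) * uSeq 1 * f (-1)

/-- numerator of the two-sided coefficients `C_{m,n}` -/
def G (n m : ℕ) : ℝ :=
  3 * (-1 : ℝ) ^ n * (a / ΔR) * uSeq (m : ℤ) * uSeq 1 * f (n : ℤ)
  + (∑ k ∈ Finset.Icc (1 : ℤ) ((n : ℤ) - 1),
      3 * (-1 : ℝ) ^ k * (a / ΔR) * uSeq (m : ℤ) * (uSeq ((n : ℤ) - k + 1) - uSeq ((n : ℤ) - k - 1)) * f k)
  + 3 * ((a / ΔR) * uSeq (m : ℤ) * (uSeq (n : ℤ) - uSeq ((n : ℤ) - 1))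
          - (b / ΔL) * uSeq (n : ℤ) * (uSeq (m : ℤ) - uSeq ((m : ℤ) - 1))) * f 0
  + (∑ k ∈ Finset.Icc (-(m : ℤ) + 1) (-1 : ℤ),
      3 * (-1 : ℝ) ^ (k + 1) * (b / ΔL) * uSeq (n : ℤ) * (uSeq ((m : ℤ) + k + 1) - uSeq ((m : ℤ) + k - 1)) * f k)
  + 3 * (-1 : ℝ) ^ (m + 1) * (b / ΔL) * uSeq (n : ℤ) * uSeq 1 * f (-(m : ℤ))

lemma G_one (n : ℕ) : G a b ΔL ΔR f n 1 = V a b ΔL ΔR f n := by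
  unfold G V
  norm_num [uSeq_zero]

lemma u_two : uSeq 2 = 4 * uSeq 1 := by
  have := uSeq_rec 1
  norm_num [uSeq_zero] at this
  convert this using 2 <;> norm_num

lemma u_three : uSeq 3 = 15 * uSeq 1 := by
  have h := uSeq_rec 2
  norm_num at h
  rw [h, u_two]; ring

lemma V_one_eq : V a b ΔL ΔR f 1 =
    3 * (a / ΔR) * uSeq 1 * uSeq 1 * (f 0 - f 1)
      + 3 * (b / ΔL) * uSeq 1 * uSeq 1 * (f (-1) - f 0) := by
  unfold V
  norm_num [uSeq_zero]
  ring

lemma V_two_eq : V a b ΔL ΔR f 2 =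
    4 * V a b ΔL ΔR f 1 + 3 * uSeq 1 ^ 2 * a * (f 2 - f 0) / ΔR := by
  unfold V
  norm_num [uSeq_zero, u_two]
  ring

lemma V_rec (j : ℕ) (hj : 1 ≤ j) :
    V a b ΔL ΔR f (j + 2) = 4 * V a b ΔL ΔR f (j + 1) - V a b ΔL ΔR f j
      + 3 * (-1 : ℝ) ^ j * uSeq 1 ^ 2 * a * (f ((j : ℤ) + 2) - f (j : ℤ)) / ΔR := by
  have hj1 : (1:ℤ) ≤ (j:ℤ) := by exact_mod_cast hj
  unfold V
  push_cast
  simp only [show (j:ℤ) + 2 - 1 = (j:ℤ) + 1 from by ring,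
    show (j:ℤ) + 1 - 1 = (j:ℤ) from by ring]
  have h1 : (∑ x ∈ Finset.Icc (1:ℤ) ((j:ℤ) + 1),
        3 * (-1:ℝ) ^ x * (a / ΔR) * uSeq 1 * (uSeq ((j:ℤ) + 2 - x + 1) - uSeq ((j:ℤ) + 2 - x - 1)) * f x)
      = (∑ x ∈ Finset.Icc (1:ℤ) ((j:ℤ) - 1),
          3 * (-1:ℝ) ^ x * (a / ΔR) * uSeq 1 * (uSeq ((j:ℤ) + 2 - x + 1) - uSeq ((j:ℤ) + 2 - x - 1)) * f x)
        + 3 * (-1:ℝ) ^ (j:ℤ) * (a / ΔR) * uSeq 1 * (uSeq 3 - uSeq 1) * f (j:ℤ)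
        + 3 * (-1:ℝ) ^ ((j:ℤ) + 1) * (a / ΔR) * uSeq 1 * (uSeq 2 - uSeq 0) * f ((j:ℤ) + 1) := by
    rw [sum_Icc_top _ (by omega : (1:ℤ) ≤ (j:ℤ) + 1),
      show (j:ℤ) + 1 - 1 = (j:ℤ) from by ring,
      sum_Icc_top _ hj1,
      show (j:ℤ) + 2 - ((j:ℤ) + 1) + 1 = 2 from by ring,
      show (j:ℤ) + 2 - ((j:ℤ) + 1) - 1 = 0 from by ring,
      show (j:ℤ) + 2 - (j:ℤ) + 1 = 3 from by ring,
      show (j:ℤ) + 2 - (j:ℤ) - 1 = 1 from by ring]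
  have h2 : (∑ x ∈ Finset.Icc (1:ℤ) (j:ℤ),
        3 * (-1:ℝ) ^ x * (a / ΔR) * uSeq 1 * (uSeq ((j:ℤ) + 1 - x + 1) - uSeq ((j:ℤ) + 1 - x - 1)) * f x)
      = (∑ x ∈ Finset.Icc (1:ℤ) ((j:ℤ) - 1),
          3 * (-1:ℝ) ^ x * (a / ΔR) * uSeq 1 * (uSeq ((j:ℤ) + 1 - x + 1) - uSeq ((j:ℤ) + 1 - x - 1)) * f x)
        + 3 * (-1:ℝ) ^ (j:ℤ) * (a / ΔR) * uSeq 1 * (uSeq 2 - uSeq 0) * f (j:ℤ) := by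
    rw [sum_Icc_top _ hj1,
      show (j:ℤ) + 1 - (j:ℤ) + 1 = 2 from by ring,
      show (j:ℤ) + 1 - (j:ℤ) - 1 = 0 from by ring]
  have h3 : (∑ x ∈ Finset.Icc (1:ℤ) ((j:ℤ) - 1),
        3 * (-1:ℝ) ^ x * (a / ΔR) * uSeq 1 * (uSeq ((j:ℤ) + 2 - x + 1) - uSeq ((j:ℤ) + 2 - x - 1)) * f x)
      = 4 * (∑ x ∈ Finset.Icc (1:ℤ) ((j:ℤ) - 1),
          3 * (-1:ℝ) ^ x * (a / ΔR) * uSeq 1 * (uSeq ((j:ℤ) + 1 - x + 1) - uSeq ((j:ℤ) + 1 - x - 1)) * f x)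
        - (∑ x ∈ Finset.Icc (1:ℤ) ((j:ℤ) - 1),
          3 * (-1:ℝ) ^ x * (a / ΔR) * uSeq 1 * (uSeq ((j:ℤ) - x + 1) - uSeq ((j:ℤ) - x - 1)) * f x) := by
    rw [Finset.mul_sum, ← Finset.sum_sub_distrib]
    apply Finset.sum_congr rfl
    intro x hx
    have r1 : uSeq ((j:ℤ) + 2 - x + 1) = 4 * uSeq ((j:ℤ) + 1 - x + 1) - uSeq ((j:ℤ) - x + 1) := by
      rw [show (j:ℤ) + 2 - x + 1 = ((j:ℤ) + 1 - x + 1) + 1 from by ring,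
        show (j:ℤ) - x + 1 = ((j:ℤ) + 1 - x + 1) - 1 from by ring]
      exact uSeq_rec _
    have r2 : uSeq ((j:ℤ) + 2 - x - 1) = 4 * uSeq ((j:ℤ) + 1 - x - 1) - uSeq ((j:ℤ) - x - 1) := by
      rw [show (j:ℤ) + 2 - x - 1 = ((j:ℤ) + 1 - x - 1) + 1 from by ring,
        show (j:ℤ) - x - 1 = ((j:ℤ) + 1 - x - 1) - 1 from by ring]
      exact uSeq_rec _
    rw [r1, r2]
    ring
  rw [h1, h2, h3]
  have q1 : (-1:ℝ) ^ ((j:ℤ)) = (-1:ℝ) ^ (j:ℕ) := zpow_natCast (-1) j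
  have q2 : (-1:ℝ) ^ ((j:ℤ) + 1) = -(-1:ℝ) ^ (j:ℕ) := by
    rw [zpow_add_one₀ (by norm_num : (-1:ℝ) ≠ 0), q1]; ring
  have r3 : uSeq ((j:ℤ) + 2) = 4 * uSeq ((j:ℤ) + 1) - uSeq (j:ℤ) := by
    have := uSeq_rec ((j:ℤ) + 1)
    simpa only [show (j:ℤ) + 1 + 1 = (j:ℤ) + 2 from by ring,
      show (j:ℤ) + 1 - 1 = (j:ℤ) from by ring] using this
  have r4 : uSeq ((j:ℤ) + 1) = 4 * uSeq (j:ℤ) - uSeq ((j:ℤ) - 1) := uSeq_rec _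
  rw [q1, q2, u_two, u_three, uSeq_zero, r3, r4, pow_succ, pow_succ]
  ring

lemma neg_one_zpow_neg_natCast (m : ℕ) : (-1:ℝ) ^ (-(m:ℤ)) = (-1:ℝ) ^ m := by
  rw [zpow_neg, zpow_natCast]
  rcases Nat.even_or_odd m with h | h
  · rw [h.neg_one_pow]; norm_num
  · rw [h.neg_one_pow]; norm_num

lemma G_two (n : ℕ) : G a b ΔL ΔR f n 2 =
    4 * G a b ΔL ΔR f n 1 + 3 * uSeq 1 * uSeq (n:ℤ) * b * (f 0 - f (-2)) / ΔL := by
  unfold G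
  norm_num [uSeq_zero]
  rw [u_two]
  have hs : (∑ x ∈ Finset.Icc (1:ℤ) ((n:ℤ) - 1),
      3 * (-1:ℝ) ^ x * (a / ΔR) * (4 * uSeq 1) * (uSeq ((n:ℤ) - x + 1) - uSeq ((n:ℤ) - x - 1)) * f x)
      = 4 * ∑ x ∈ Finset.Icc (1:ℤ) ((n:ℤ) - 1),
      3 * (-1:ℝ) ^ x * (a / ΔR) * uSeq 1 * (uSeq ((n:ℤ) - x + 1) - uSeq ((n:ℤ) - x - 1)) * f x := by
    rw [Finset.mul_sum]
    exact Finset.sum_congr rfl fun x hx => by ring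
  rw [hs]
  ring

set_option maxHeartbeats 1000000 in
lemma G_rec (n m : ℕ) (hm : 1 ≤ m) :
    G a b ΔL ΔR f n (m + 2) = 4 * G a b ΔL ΔR f n (m + 1) - G a b ΔL ΔR f n m
      + 3 * (-1 : ℝ) ^ m * uSeq 1 * uSeq (n:ℤ) * b * (f (-(m : ℤ)) - f (-(m : ℤ) - 2)) / ΔL := by
  unfold G
  push_cast
  simp only [show (-((m:ℤ) + 2) : ℤ) = -(m:ℤ) - 2 from by ring,
    show (-((m:ℤ) + 1) : ℤ) = -(m:ℤ) - 1 from by ring,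
    show (-(m:ℤ) - 2 + 1 : ℤ) = -(m:ℤ) - 1 from by ring,
    show (-(m:ℤ) - 1 + 1 : ℤ) = -(m:ℤ) from by ring,
    show ((m:ℤ) + 2 - 1 : ℤ) = (m:ℤ) + 1 from by ring,
    show ((m:ℤ) + 1 - 1 : ℤ) = (m:ℤ) from by ring]
  have r3 : uSeq ((m:ℤ) + 2) = 4 * uSeq ((m:ℤ) + 1) - uSeq (m:ℤ) := by
    have := uSeq_rec ((m:ℤ) + 1)
    simpa only [show (m:ℤ) + 1 + 1 = (m:ℤ) + 2 from by ring,
      show (m:ℤ) + 1 - 1 = (m:ℤ) from by ring] using this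
  have r4 : uSeq ((m:ℤ) + 1) = 4 * uSeq (m:ℤ) - uSeq ((m:ℤ) - 1) := uSeq_rec _
  -- backward sums
  have h1 : (∑ x ∈ Finset.Icc (-(m:ℤ) - 1) (-1 : ℤ),
        3 * (-1:ℝ) ^ (x + 1) * (b / ΔL) * uSeq (n:ℤ) * (uSeq ((m:ℤ) + 2 + x + 1) - uSeq ((m:ℤ) + 2 + x - 1)) * f x)
      = 3 * (-1:ℝ) ^ m * (b / ΔL) * uSeq (n:ℤ) * (uSeq 2 - uSeq 0) * f (-(m:ℤ) - 1)
        + 3 * (-(-1:ℝ) ^ m) * (b / ΔL) * uSeq (n:ℤ) * (uSeq 3 - uSeq 1) * f (-(m:ℤ))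
        + (∑ x ∈ Finset.Icc (-(m:ℤ) + 1) (-1 : ℤ),
            3 * (-1:ℝ) ^ (x + 1) * (b / ΔL) * uSeq (n:ℤ) * (uSeq ((m:ℤ) + 2 + x + 1) - uSeq ((m:ℤ) + 2 + x - 1)) * f x) := by
    rw [sum_Icc_bot _ (by omega : -(m:ℤ) - 1 ≤ -1),
      show (-(m:ℤ) - 1 + 1 : ℤ) = -(m:ℤ) from by ring,
      sum_Icc_bot _ (by omega : -(m:ℤ) ≤ -1),
      show ((m:ℤ) + 2 + (-(m:ℤ) - 1) + 1 : ℤ) = 2 from by ring,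
      show ((m:ℤ) + 2 + (-(m:ℤ) - 1) - 1 : ℤ) = 0 from by ring,
      show ((m:ℤ) + 2 + -(m:ℤ) + 1 : ℤ) = 3 from by ring,
      show ((m:ℤ) + 2 + -(m:ℤ) - 1 : ℤ) = 1 from by ring,
      show (-(m:ℤ) + 1 : ℤ) = -((m:ℤ) - 1) from by ring,
      neg_one_zpow_neg_natCast,
      show (-((m:ℤ) - 1) : ℤ) = -(m:ℤ) + 1 from by ring]
    have q2 : (-1:ℝ) ^ (-(m:ℤ) + 1) = -(-1:ℝ) ^ m := by
      rw [zpow_add_one₀ (by norm_num : (-1:ℝ) ≠ 0), neg_one_zpow_neg_natCast]; ring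
    rw [q2]
    ring
  have h2 : (∑ x ∈ Finset.Icc (-(m:ℤ)) (-1 : ℤ),
        3 * (-1:ℝ) ^ (x + 1) * (b / ΔL) * uSeq (n:ℤ) * (uSeq ((m:ℤ) + 1 + x + 1) - uSeq ((m:ℤ) + 1 + x - 1)) * f x)
      = 3 * (-(-1:ℝ) ^ m) * (b / ΔL) * uSeq (n:ℤ) * (uSeq 2 - uSeq 0) * f (-(m:ℤ))
        + (∑ x ∈ Finset.Icc (-(m:ℤ) + 1) (-1 : ℤ),
            3 * (-1:ℝ) ^ (x + 1) * (b / ΔL) * uSeq (n:ℤ) * (uSeq ((m:ℤ) + 1 + x + 1) - uSeq ((m:ℤ) + 1 + x - 1)) * f x) := by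
    rw [sum_Icc_bot _ (by omega : -(m:ℤ) ≤ -1),
      show ((m:ℤ) + 1 + -(m:ℤ) + 1 : ℤ) = 2 from by ring,
      show ((m:ℤ) + 1 + -(m:ℤ) - 1 : ℤ) = 0 from by ring]
    have q2 : (-1:ℝ) ^ (-(m:ℤ) + 1) = -(-1:ℝ) ^ m := by
      rw [zpow_add_one₀ (by norm_num : (-1:ℝ) ≠ 0), neg_one_zpow_neg_natCast]; ring
    rw [q2]
  have h3 : (∑ x ∈ Finset.Icc (-(m:ℤ) + 1) (-1 : ℤ),
        3 * (-1:ℝ) ^ (x + 1) * (b / ΔL) * uSeq (n:ℤ) * (uSeq ((m:ℤ) + 2 + x + 1) - uSeq ((m:ℤ) + 2 + x - 1)) * f x)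
      = 4 * (∑ x ∈ Finset.Icc (-(m:ℤ) + 1) (-1 : ℤ),
          3 * (-1:ℝ) ^ (x + 1) * (b / ΔL) * uSeq (n:ℤ) * (uSeq ((m:ℤ) + 1 + x + 1) - uSeq ((m:ℤ) + 1 + x - 1)) * f x)
        - (∑ x ∈ Finset.Icc (-(m:ℤ) + 1) (-1 : ℤ),
          3 * (-1:ℝ) ^ (x + 1) * (b / ΔL) * uSeq (n:ℤ) * (uSeq ((m:ℤ) + x + 1) - uSeq ((m:ℤ) + x - 1)) * f x) := by
    rw [Finset.mul_sum, ← Finset.sum_sub_distrib]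
    apply Finset.sum_congr rfl
    intro x hx
    have s1 : uSeq ((m:ℤ) + 2 + x + 1) = 4 * uSeq ((m:ℤ) + 1 + x + 1) - uSeq ((m:ℤ) + x + 1) := by
      rw [show (m:ℤ) + 2 + x + 1 = ((m:ℤ) + 1 + x + 1) + 1 from by ring,
        show (m:ℤ) + x + 1 = ((m:ℤ) + 1 + x + 1) - 1 from by ring]
      exact uSeq_rec _
    have s2 : uSeq ((m:ℤ) + 2 + x - 1) = 4 * uSeq ((m:ℤ) + 1 + x - 1) - uSeq ((m:ℤ) + x - 1) := by
      rw [show (m:ℤ) + 2 + x - 1 = ((m:ℤ) + 1 + x - 1) + 1 from by ring,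
        show (m:ℤ) + x - 1 = ((m:ℤ) + 1 + x - 1) - 1 from by ring]
      exact uSeq_rec _
    rw [s1, s2]
    ring
  -- forward sums
  have h4 : (∑ x ∈ Finset.Icc (1:ℤ) ((n:ℤ) - 1),
        3 * (-1:ℝ) ^ x * (a / ΔR) * uSeq ((m:ℤ) + 2) * (uSeq ((n:ℤ) - x + 1) - uSeq ((n:ℤ) - x - 1)) * f x)
      = 4 * (∑ x ∈ Finset.Icc (1:ℤ) ((n:ℤ) - 1),
          3 * (-1:ℝ) ^ x * (a / ΔR) * uSeq ((m:ℤ) + 1) * (uSeq ((n:ℤ) - x + 1) - uSeq ((n:ℤ) - x - 1)) * f x)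
        - (∑ x ∈ Finset.Icc (1:ℤ) ((n:ℤ) - 1),
          3 * (-1:ℝ) ^ x * (a / ΔR) * uSeq (m:ℤ) * (uSeq ((n:ℤ) - x + 1) - uSeq ((n:ℤ) - x - 1)) * f x) := by
    rw [Finset.mul_sum, ← Finset.sum_sub_distrib]
    apply Finset.sum_congr rfl
    intro x hx
    rw [r3]
    ring
  rw [h1, h2, h3, h4, r3, r4, u_two, u_three, uSeq_zero, pow_succ, pow_succ, pow_succ]
  ring

lemma E_apply (j : ℕ) : E a j = uSeq (j : ℤ) + uSeq ((j : ℤ) - 1) * a := rfl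

lemma D_apply (n m : ℕ) : D a b n m =
    uSeq (m : ℤ) * uSeq (n : ℤ) + uSeq (m : ℤ) * uSeq ((n : ℤ) - 1) * a
      + uSeq (n : ℤ) * uSeq ((m : ℤ) - 1) * b := rfl

end
end TSW

open TSW in
set_option maxHeartbeats 2000000 in
/-- **Explicit weights of the inhomogeneous coefficient `c_{m,n}` of the
two-sided extension relation in the uniform-per-patch case.** For a fixed
`n ≥ 1`, the coefficient `C_{m,n}` obtained from the forward value `C_{1,n}`
by the backward recursion has nonzero denominators and equals the weighted sum
`Σ_{k=-m}^{n} ω_{k,m,n} f_k` with the stated explicit weights. -/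
theorem two_sided_inhomogeneous_coefficient_weights
    (ΔL ΔR : ℝ) (hL : 0 < ΔL) (hR : 0 < ΔR)
    (a b : ℝ)
    (ha : a = -(1/2) * ΔL / (ΔR + ΔL))
    (hb : b = -(1/2) * ΔR / (ΔR + ΔL))
    (f : ℤ → ℝ) (n : ℕ) (hn : 1 ≤ n)
    (A : ℕ → ℝ)
    (hA : ∀ j : ℕ, 1 ≤ j →
      A j = (-1 : ℝ) ^ (j - 1) * uSeq 1 * a / (uSeq (j : ℤ) + uSeq ((j : ℤ) - 1) * a))
    -- the forward recursion for `C_{1,j}`, `j = 1, …, n`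
    (Cf : ℕ → ℝ)
    (hCf1 : Cf 1 = 3/2 * (1 / (ΔR + ΔL)) *
      ((ΔL / ΔR) * f 1 + (ΔR / ΔL - ΔL / ΔR) * f 0 - (ΔR / ΔL) * f (-1)))
    (hCf2 : Cf 2 = (4 * Cf 1 + 3 * a * (f 2 - f 0) / ΔR) / (4 + a))
    (hCfrec : ∀ j : ℕ, 2 ≤ j →
      Cf (j + 1) = (4 * Cf j + (A j / A (j - 1)) * Cf (j - 1)
                    + 3 * A j * (f ((j : ℤ) + 1) - f ((j : ℤ) - 1)) / ΔR) /
                   (4 + A j / A (j - 1)))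
    -- the backward coefficients `b_{m,n}` with base value `b_{1,n}`
    (B : ℕ → ℝ)
    (hB1 : B 1 = uSeq (n : ℤ) * b / (uSeq (n : ℤ) + uSeq ((n : ℤ) - 1) * a))
    (hB2 : B 2 = -B 1 / (4 + B 1))
    (hBrec : ∀ j : ℕ, 2 ≤ j → B (j + 1) = -B j / (4 + B j / B (j - 1)))
    -- the backward recursion for `C_{m,n}`, starting from `C_{1,n} = Cf n`
    (C : ℕ → ℝ)
    (hCm1 : C 1 = Cf n)
    (hCm2 : C 2 = (4 * C 1 + 3 * B 1 * (f 0 - f (-2)) / ΔL) / (4 + B 1))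
    (hCmrec : ∀ m : ℕ, 2 ≤ m →
      C (m + 1) = (4 * C m + (B m / B (m - 1)) * C (m - 1)
                    + 3 * B m * (f (-(m : ℤ) + 1) - f (-(m : ℤ) - 1)) / ΔL) /
                  (4 + B m / B (m - 1))) :
    (∀ j : ℕ, 1 ≤ j → uSeq (j : ℤ) + uSeq ((j : ℤ) - 1) * a ≠ 0) ∧
    (4 + a ≠ 0) ∧
    (∀ j : ℕ, 2 ≤ j → A (j - 1) ≠ 0 ∧ 4 + A j / A (j - 1) ≠ 0) ∧
    (4 + B 1 ≠ 0) ∧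
    (∀ m : ℕ, 2 ≤ m → B (m - 1) ≠ 0 ∧ 4 + B m / B (m - 1) ≠ 0) ∧
    (∀ m : ℕ, 1 ≤ m →
      C m = 3 * (-1 : ℝ) ^ n * (a / ΔR) * uSeq (m : ℤ) * uSeq 1 /
              (uSeq (m : ℤ) * uSeq (n : ℤ) + uSeq (m : ℤ) * uSeq ((n : ℤ) - 1) * a
                + uSeq (n : ℤ) * uSeq ((m : ℤ) - 1) * b) * f (n : ℤ)
          + (∑ k ∈ Finset.Icc (1 : ℤ) ((n : ℤ) - 1),
              3 * (-1 : ℝ) ^ k * (a / ΔR) * uSeq (m : ℤ) *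
                (uSeq ((n : ℤ) - k + 1) - uSeq ((n : ℤ) - k - 1)) /
                (uSeq (m : ℤ) * uSeq (n : ℤ) + uSeq (m : ℤ) * uSeq ((n : ℤ) - 1) * a
                  + uSeq (n : ℤ) * uSeq ((m : ℤ) - 1) * b) * f k)
          + 3 * ((a / ΔR) * uSeq (m : ℤ) * (uSeq (n : ℤ) - uSeq ((n : ℤ) - 1))
                  - (b / ΔL) * uSeq (n : ℤ) * (uSeq (m : ℤ) - uSeq ((m : ℤ) - 1))) /
              (uSeq (m : ℤ) * uSeq (n : ℤ) + uSeq (m : ℤ) * uSeq ((n : ℤ) - 1) * a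
                + uSeq (n : ℤ) * uSeq ((m : ℤ) - 1) * b) * f 0
          + (∑ k ∈ Finset.Icc (-(m : ℤ) + 1) (-1 : ℤ),
              3 * (-1 : ℝ) ^ (k + 1) * (b / ΔL) * uSeq (n : ℤ) *
                (uSeq ((m : ℤ) + k + 1) - uSeq ((m : ℤ) + k - 1)) /
                (uSeq (m : ℤ) * uSeq (n : ℤ) + uSeq (m : ℤ) * uSeq ((n : ℤ) - 1) * a
                  + uSeq (n : ℤ) * uSeq ((m : ℤ) - 1) * b) * f k)
          + 3 * (-1 : ℝ) ^ (m + 1) * (b / ΔL) * uSeq (n : ℤ) * uSeq 1 /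
              (uSeq (m : ℤ) * uSeq (n : ℤ) + uSeq (m : ℤ) * uSeq ((n : ℤ) - 1) * a
                + uSeq (n : ℤ) * uSeq ((m : ℤ) - 1) * b) * f (-(m : ℤ))) := by
  have hsum : (0:ℝ) < ΔR + ΔL := by linarith
  have ha2 : a < 0 := by
    rw [ha]; apply div_neg_of_neg_of_pos <;> linarith
  have ha1 : -(1/2) < a := by
    rw [ha, lt_div_iff₀ hsum]; nlinarith
  have hb2 : b < 0 := by
    rw [hb]; apply div_neg_of_neg_of_pos <;> linarith
  have hb1 : -(1/2) < b := by
    rw [hb, lt_div_iff₀ hsum]; nlinarith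
  have hu1 : (0:ℝ) < uSeq 1 := uSeq_one_pos
  have hun : (0:ℝ) < uSeq (n:ℤ) := uSeq_pos (by exact_mod_cast hn)
  have hEpos : ∀ j : ℕ, 1 ≤ j → 0 < E a j := fun j hj => E_pos ha1 ha2 hj
  have hDpos : ∀ m : ℕ, 1 ≤ m → 0 < D a b n m :=
    fun m hm => D_pos ha1 ha2 hb1 hb2 hn hm
  -- values of A
  have hAval : ∀ i : ℕ, A (i + 1) = (-1:ℝ) ^ i * uSeq 1 * a / E a (i + 1) := by
    intro i
    have := hA (i + 1) (by omega)
    simpa only [Nat.add_sub_cancel, E_apply] using this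
  have hAne : ∀ i : ℕ, A (i + 1) ≠ 0 := by
    intro i
    rw [hAval i]
    exact div_ne_zero (mul_ne_zero (mul_ne_zero (pow_ne_zero _ (by norm_num)) hu1.ne') ha2.ne)
      (hEpos (i+1) (by omega)).ne'
  have hratioA : ∀ i : ℕ, A (i + 2) / A (i + 1) = -(E a (i + 1)) / E a (i + 2) := by
    intro i
    have h2 : A (i + 2) = (-1:ℝ) ^ (i + 1) * uSeq 1 * a / E a (i + 2) := hAval (i + 1)
    have e1 := (hEpos (i+1) (by omega)).ne'
    have e2 := (hEpos (i+2) (by omega)).ne'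
    rw [div_eq_div_iff (hAne i) e2, h2, hAval i, pow_succ]
    field_simp
  have h4A : ∀ i : ℕ, 4 + A (i + 2) / A (i + 1) = E a (i + 3) / E a (i + 2) := by
    intro i
    rw [hratioA i]
    have hrec : E a (i + 3) = 4 * E a (i + 2) - E a (i + 1) := E_rec a (i + 1)
    have e2 := (hEpos (i+2) (by omega)).ne'
    rw [hrec]
    field_simp
    ring
  -- closed form for B
  have hKne : uSeq 1 * uSeq (n:ℤ) * b ≠ 0 := mul_ne_zero (mul_ne_zero hu1.ne' hun.ne') hb2.ne
  have hEn := (hEpos n hn).ne'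
  have hEn' : uSeq (n:ℤ) + uSeq ((n:ℤ) - 1) * a ≠ 0 := hEn
  have hB1' : B 1 = uSeq 1 * uSeq (n:ℤ) * b / D a b n 1 := by
    rw [hB1, ← E_apply, D_one]
    field_simp
  have h4B1 : 4 + B 1 = D a b n 2 / D a b n 1 := by
    have d1 := (hDpos 1 (by omega)).ne'
    rw [hB1', D_two]
    field_simp
  have h4B1pos : 0 < 4 + B 1 := by
    rw [h4B1]
    exact div_pos (hDpos 2 (by omega)) (hDpos 1 (by omega))
  have hBform : ∀ i : ℕ,
      B (i+1) = (-1:ℝ)^i * (uSeq 1 * uSeq (n:ℤ) * b) / D a b n (i+1)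
      ∧ B (i+2) = (-1:ℝ)^(i+1) * (uSeq 1 * uSeq (n:ℤ) * b) / D a b n (i+2) := by
    intro i
    induction i with
    | zero =>
      constructor
      · rw [hB1']; norm_num
      · have d1 := (hDpos 1 (by omega)).ne'
        have d2 := (hDpos 2 (by omega)).ne'
        rw [hB2, h4B1, hB1']
        field_simp
        ring
    | succ i ih =>
      refine ⟨ih.2, ?_⟩
      have hrec := hBrec (i+2) (by omega)
      simp only [show i+2-1 = i+1 from by omega] at hrec
      have d1 := (hDpos (i+1) (by omega)).ne'
      have d2 := (hDpos (i+2) (by omega)).ne'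
      have d3 : D a b n (i+3) ≠ 0 := (hDpos (i+3) (by omega)).ne'
      have hDr : D a b n (i+3) = 4 * D a b n (i+2) - D a b n (i+1) := D_rec a b n (i+1)
      have hrat : B (i+2) / B (i+1) = -(D a b n (i+1)) / D a b n (i+2) := by
        rw [ih.1, ih.2, pow_succ]
        field_simp
        ring
        simp [hb2.ne]
      have h4r : 4 + B (i+2) / B (i+1) = D a b n (i+3) / D a b n (i+2) := by
        rw [hrat, hDr]
        field_simp
        ring
      have : B (i+2+1) = -B (i+2) / (D a b n (i+3) / D a b n (i+2)) := by
        rw [hrec, h4r]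
      rw [show i+1+2 = i+2+1 from by omega, this, ih.2]
      rw [show i+1+1 = i+2 from by omega]
      field_simp
      ring
  have hBne : ∀ i : ℕ, B (i+1) ≠ 0 := by
    intro i
    rw [(hBform i).1]
    exact div_ne_zero (mul_ne_zero (pow_ne_zero _ (by norm_num)) hKne)
      (hDpos (i+1) (by omega)).ne'
  have hratB : ∀ i : ℕ, B (i+2) / B (i+1) = -(D a b n (i+1)) / D a b n (i+2) := by
    intro i
    have d1 := (hDpos (i+1) (by omega)).ne'
    have d2 := (hDpos (i+2) (by omega)).ne'
    rw [(hBform i).1, (hBform i).2, pow_succ]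
    field_simp
    ring
    simp [hb2.ne]
  have h4B : ∀ i : ℕ, 4 + B (i+2) / B (i+1) = D a b n (i+3) / D a b n (i+2) := by
    intro i
    have d2 := (hDpos (i+2) (by omega)).ne'
    have hDr : D a b n (i+3) = 4 * D a b n (i+2) - D a b n (i+1) := D_rec a b n (i+1)
    rw [hratB i, hDr]
    field_simp
    ring
  -- closed form for Cf
  have h4a : (4:ℝ) + a ≠ 0 := by intro h; linarith
  have hE1 : E a 1 = uSeq 1 := by
    rw [E_apply]; norm_num [uSeq_zero]
  have hE2 : E a 2 = uSeq 1 * (4 + a) := by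
    rw [E_apply]; norm_num [u_two]; ring
  have hCfb1 : Cf 1 = V a b ΔL ΔR f 1 / (uSeq 1 * E a 1) := by
    rw [hCf1, V_one_eq, hE1, ha, hb]
    field_simp
    ring
  have hCfb2 : Cf 2 = V a b ΔL ΔR f 2 / (uSeq 1 * E a 2) := by
    rw [hCf2, hCfb1, V_two_eq, hE1, hE2]
    field_simp
  have hCfform : ∀ i : ℕ,
      Cf (i+1) = V a b ΔL ΔR f (i+1) / (uSeq 1 * E a (i+1))
      ∧ Cf (i+2) = V a b ΔL ΔR f (i+2) / (uSeq 1 * E a (i+2)) := by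
    intro i
    induction i with
    | zero => exact ⟨hCfb1, hCfb2⟩
    | succ i ih =>
      refine ⟨ih.2, ?_⟩
      have hrec := hCfrec (i+2) (by omega)
      simp only [show i+2-1 = i+1 from by omega] at hrec
      have hv := V_rec a b ΔL ΔR f (i+1) (by omega)
      push_cast at hrec hv
      rw [show (i:ℤ)+2+1 = (i:ℤ)+3 from by ring, show (i:ℤ)+2-1 = (i:ℤ)+1 from by ring] at hrec
      rw [show (i:ℤ)+1+2 = (i:ℤ)+3 from by ring] at hv
      simp only [show i+2+1 = i+3 from by omega, show i+1+2 = i+3 from by omega,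
        show i+1+1 = i+2 from by omega] at hrec hv ⊢
      have e1 := (hEpos (i+1) (by omega)).ne'
      have e2 := (hEpos (i+2) (by omega)).ne'
      have e3 := (hEpos (i+3) (by omega)).ne'
      have hAv2 : A (i+2) = (-1:ℝ)^(i+1) * uSeq 1 * a / E a (i+2) := by
        have := hAval (i+1)
        simpa only [show i+1+1 = i+2 from by omega] using this
      rw [hrec, ih.1, ih.2, h4A i, hratioA i, hAv2, hv]
      field_simp
      ring
  have hCfAll : ∀ j : ℕ, 1 ≤ j → Cf j = V a b ΔL ΔR f j / (uSeq 1 * E a j) := by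
    intro j hj
    obtain ⟨i, rfl⟩ := Nat.exists_eq_add_of_le' hj
    exact (hCfform i).1
  -- closed form for C
  have hCb1 : C 1 = G a b ΔL ΔR f n 1 / D a b n 1 := by
    rw [hCm1, hCfAll n hn, ← G_one, ← D_one]
  have hCb2 : C 2 = G a b ΔL ΔR f n 2 / D a b n 2 := by
    have d1 := (hDpos 1 (by omega)).ne'
    have d2 := (hDpos 2 (by omega)).ne'
    rw [hCm2, hCb1, h4B1, hB1', G_two]
    field_simp
  have hCform : ∀ i : ℕ,
      C (i+1) = G a b ΔL ΔR f n (i+1) / D a b n (i+1)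
      ∧ C (i+2) = G a b ΔL ΔR f n (i+2) / D a b n (i+2) := by
    intro i
    induction i with
    | zero => exact ⟨hCb1, hCb2⟩
    | succ i ih =>
      refine ⟨ih.2, ?_⟩
      have hrec := hCmrec (i+2) (by omega)
      simp only [show i+2-1 = i+1 from by omega] at hrec
      have hg := G_rec a b ΔL ΔR f n (i+1) (by omega)
      push_cast at hrec hg
      rw [show (-((i:ℤ)+2)+1 : ℤ) = -(i:ℤ)-1 from by ring,
        show (-((i:ℤ)+2)-1 : ℤ) = -(i:ℤ)-3 from by ring] at hrec
      rw [show (-((i:ℤ)+1) : ℤ) = -(i:ℤ)-1 from by ring,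
        show (-(i:ℤ)-1-2 : ℤ) = -(i:ℤ)-3 from by ring] at hg
      simp only [show i+2+1 = i+3 from by omega, show i+1+2 = i+3 from by omega,
        show i+1+1 = i+2 from by omega] at hrec hg ⊢
      have d1 := (hDpos (i+1) (by omega)).ne'
      have d2 := (hDpos (i+2) (by omega)).ne'
      have d3 : D a b n (i+3) ≠ 0 := (hDpos (i+3) (by omega)).ne'
      rw [hrec, ih.1, ih.2, h4B i, hratB i, (hBform i).2, hg]
      field_simp
      ring
  refine ⟨?_, ?_, ?_, ?_, ?_, ?_⟩
  · intro j hj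
    exact (hEpos j hj).ne'
  · have : (0:ℝ) < 4 + a := by linarith
    exact this.ne'
  · intro j hj
    obtain ⟨i, rfl⟩ := Nat.exists_eq_add_of_le' hj
    constructor
    · simpa only [show i+2-1 = i+1 from by omega] using hAne i
    · simp only [show i+2-1 = i+1 from by omega]
      rw [h4A i]
      exact (div_pos (hEpos (i+3) (by omega)) (hEpos (i+2) (by omega))).ne'
  · exact h4B1pos.ne'
  · intro m hm
    obtain ⟨i, rfl⟩ := Nat.exists_eq_add_of_le' hm
    constructor
    · simpa only [show i+2-1 = i+1 from by omega] using hBne i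
    · simp only [show i+2-1 = i+1 from by omega]
      rw [h4B i]
      exact (div_pos (hDpos (i+3) (by omega)) (hDpos (i+2) (by omega))).ne'
  · intro m hm
    obtain ⟨i, rfl⟩ := Nat.exists_eq_add_of_le' hm
    rw [(hCform i).1]
    rw [show (uSeq ((i+1:ℕ) : ℤ) * uSeq (n : ℤ) + uSeq ((i+1:ℕ) : ℤ) * uSeq ((n : ℤ) - 1) * a
        + uSeq (n : ℤ) * uSeq (((i+1:ℕ) : ℤ) - 1) * b) = D a b n (i+1) from (D_apply a b n (i+1)).symm]
    rw [TSW.G]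
    rw [add_div, add_div, add_div, add_div, Finset.sum_div, Finset.sum_div]
    simp only [mul_div_right_comm]
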